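/- arXiv:2006.03009 — 2 statements merged into one kernel-verified Lean document; each statement's English description precedes it below -/
import Mathlib

section
/- Let s be a positive integer, let G be a graph that is K_4-free and SDK_s-free, and let v be a vertex of G. Let B be a set of neighbors of v, and let W be a set of vertices disjoint from B ∪ {v} such that no vertex of W is adjacent to v. Let X ⊆ B be minimal under inclusion with the property that every vertex w ∈ W having a neighbor in B also has a neighbor in X. Then |X| ≤ R(4, R(4, s)). -/
open SimpleGraph

/-- The Ramsey number `R(k, l)`: the least `N` such that every finite simple graph with at
least `N` vertices contains a clique with `k` vertices or an independent set with `l`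
vertices (an independent set of size `l` is a clique of size `l` in the complement). -/
noncomputable def ramseyNumber (k l : ℕ) : ℕ :=
  sInf {N | ∀ (V : Type) [Fintype V] (G : SimpleGraph V),
    N ≤ Fintype.card V →
      (∃ S : Finset V, G.IsNClique k S) ∨ (∃ S : Finset V, Gᶜ.IsNClique l S)}

/-- The one-subdivision of `K_{1,s}`: a center `Sum.inl ()`, middle vertices
`Sum.inr (Sum.inl i)` and leaves `Sum.inr (Sum.inr i)`; the center is adjacent to every
middle vertex, and the `i`-th middle vertex is adjacent to the `i`-th leaf. -/
def SDK (s : ℕ) : SimpleGraph (Unit ⊕ Fin s ⊕ Fin s) :=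
  SimpleGraph.fromRel (fun a b =>
    (∃ i : Fin s, a = Sum.inl () ∧ b = Sum.inr (Sum.inl i)) ∨
    (∃ i : Fin s, a = Sum.inr (Sum.inl i) ∧ b = Sum.inr (Sum.inr i)))

/-- `G` is `H`-free: no induced subgraph of `G` is isomorphic to `H`. -/
def IsFree {W V : Type*} (H : SimpleGraph W) (G : SimpleGraph V) : Prop :=
  ¬ Nonempty (H ↪g G)

/-- `nbhd G S` is the set of all vertices having a neighbour in `S`. -/
def nbhd {V : Type*} (G : SimpleGraph V) (S : Set V) : Set V :=
  {v | ∃ s ∈ S, G.Adj s v}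

/-- auxiliary lemmas -/
lemma SDK_adj_cm {s : ℕ} (j : Fin s) : (SDK s).Adj (Sum.inl ()) (Sum.inr (Sum.inl j)) := by
  simp [SDK]
lemma SDK_adj_cl {s : ℕ} (j : Fin s) : ¬ (SDK s).Adj (Sum.inl ()) (Sum.inr (Sum.inr j)) := by
  simp [SDK]
lemma SDK_adj_mm {s : ℕ} (i j : Fin s) : ¬ (SDK s).Adj (Sum.inr (Sum.inl i)) (Sum.inr (Sum.inl j)) := by
  simp [SDK]
lemma SDK_adj_ll {s : ℕ} (i j : Fin s) : ¬ (SDK s).Adj (Sum.inr (Sum.inr i)) (Sum.inr (Sum.inr j)) := by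
  simp [SDK]
lemma SDK_adj_ml {s : ℕ} (i j : Fin s) : (SDK s).Adj (Sum.inr (Sum.inl i)) (Sum.inr (Sum.inr j)) ↔ i = j := by
  simp [SDK]
  aesop

/-- The property defining `ramseyNumber k l`. -/
def RamseyProp (k l N : ℕ) : Prop :=
  ∀ (V : Type) [Fintype V] (G : SimpleGraph V),
    N ≤ Fintype.card V →
      (∃ S : Finset V, G.IsNClique k S) ∨ (∃ S : Finset V, Gᶜ.IsNClique l S)

/-- An embedding of graphs induces an embedding of complements. -/
def embCompl {α β : Type*} {G : SimpleGraph α} {H : SimpleGraph β} (f : G ↪g H) :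
    Gᶜ ↪g Hᶜ where
  toEmbedding := f.toEmbedding
  map_rel_iff' := by
    intro a b
    simp [compl_adj, f.injective.ne_iff, f.map_rel_iff]

lemma isNClique_map_emb {α β : Type*} {G : SimpleGraph α} {H : SimpleGraph β} (f : G ↪g H)
    {n : ℕ} {s : Finset α} (h : G.IsNClique n s) :
    H.IsNClique n (s.map f.toEmbedding) := by
  refine ⟨?_, by simp [h.2]⟩
  intro x hx y hy hxy
  rw [Finset.coe_map] at hx hy
  obtain ⟨a, ha, rfl⟩ := hx
  obtain ⟨b, hb, rfl⟩ := hy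
  have hab : a ≠ b := fun h' => hxy (by rw [h'])
  exact f.map_rel_iff.mpr (h.1 ha hb hab)

lemma ramseyProp_set {k l N : ℕ} (h : RamseyProp k l N) {V : Type} [Fintype V]
    (G : SimpleGraph V) (A : Set V) (hA : N ≤ A.ncard) :
    (∃ S : Finset V, ↑S ⊆ A ∧ G.IsNClique k S) ∨
      (∃ S : Finset V, ↑S ⊆ A ∧ Gᶜ.IsNClique l S) := by
  classical
  haveI : Fintype ↥A := A.toFinite.fintype
  have hcard : N ≤ Fintype.card ↥A := by
    rwa [← Set.toFinset_card, ← Set.ncard_eq_toFinset_card']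
  rcases h ↥A (G.induce A) hcard with ⟨S, hS⟩ | ⟨S, hS⟩
  · left
    refine ⟨S.map (Embedding.induce (G := G) A).toEmbedding, ?_, isNClique_map_emb _ hS⟩
    intro x hx
    rw [Finset.coe_map] at hx
    obtain ⟨a, _, rfl⟩ := hx
    exact a.2
  · right
    refine ⟨S.map (embCompl (Embedding.induce (G := G) A)).toEmbedding, ?_, ?_⟩
    · intro x hx
      rw [Finset.coe_map] at hx
      obtain ⟨a, _, rfl⟩ := hx
      exact a.2
    · exact isNClique_map_emb (embCompl (Embedding.induce A)) hS

lemma ramseyProp_exists (k l : ℕ) : ∃ N, RamseyProp k l N := by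
  classical
  induction k generalizing l with
  | zero =>
    exact ⟨0, fun V _ G _ => Or.inl ⟨∅, by simp⟩⟩
  | succ k ihk =>
    induction l with
    | zero =>
      exact ⟨0, fun V _ G _ => Or.inr ⟨∅, by simp⟩⟩
    | succ l ihl =>
      obtain ⟨N1, h1⟩ := ihk (l + 1)
      obtain ⟨N2, h2⟩ := ihl
      refine ⟨N1 + N2 + 1, ?_⟩
      intro V _ G hcard
      have hne : Nonempty V := by
        rw [← Fintype.card_pos_iff]; omega
      obtain ⟨v⟩ := hne
      set A : Finset V := Finset.univ.filter (fun u => G.Adj v u) with hA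
      have hvA : v ∉ A := by simp [hA]
      set C : Finset V := Finset.univ \ insert v A with hC
      have hcC : C.card = Fintype.card V - (A.card + 1) := by
        rw [hC, Finset.card_sdiff_of_subset (Finset.subset_univ _), Finset.card_insert_of_notMem hvA,
          Finset.card_univ]
      have hsplit : N1 ≤ A.card ∨ N2 ≤ C.card := by omega
      rcases hsplit with hle | hle
      · rcases ramseyProp_set h1 G ↑A (by rwa [Set.ncard_coe_finset]) with
          ⟨S, hSA, hS⟩ | ⟨S, _, hS⟩
        · left
          have hvS : v ∉ S := fun hv => hvA (by exact_mod_cast hSA hv)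
          refine ⟨insert v S, hS.insert ?_⟩
          intro b hb
          have : b ∈ A := by exact_mod_cast hSA hb
          simpa [hA] using this
        · exact Or.inr ⟨S, hS⟩
      · rcases ramseyProp_set h2 G ↑C (by rwa [Set.ncard_coe_finset]) with
          ⟨S, _, hS⟩ | ⟨S, hSC, hS⟩
        · exact Or.inl ⟨S, hS⟩
        · right
          refine ⟨insert v S, hS.insert ?_⟩
          intro b hb
          have hbC : b ∈ C := by exact_mod_cast hSC hb
          rw [hC, Finset.mem_sdiff, Finset.mem_insert] at hbC
          push_neg at hbC
          rw [compl_adj]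
          refine ⟨fun h => hbC.2.1 h.symm, fun h => hbC.2.2 (by simpa [hA] using h)⟩

lemma ramseyNumber_spec (k l : ℕ) : RamseyProp k l (ramseyNumber k l) := by
  have : ramseyNumber k l = sInf {N | RamseyProp k l N} := rfl
  rw [this]
  exact Nat.sInf_mem (ramseyProp_exists k l)

lemma exists_completeGraph_emb {α : Type*} {G : SimpleGraph α} {n : ℕ} {S : Finset α}
    (h : G.IsNClique n S) : Nonempty (completeGraph (Fin n) ↪g G) := by
  let e := (S.equivFinOfCardEq h.2).symm
  refine ⟨⟨⟨fun i => ↑(e i), fun i j hij => e.injective (Subtype.ext hij)⟩, ?_⟩⟩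
  intro i j
  show G.Adj ↑(e i) ↑(e j) ↔ i ≠ j
  constructor
  · exact fun h' hij => h'.ne (by rw [hij])
  · intro hij
    exact h.1 (Finset.mem_coe.mpr (e i).2) (Finset.mem_coe.mpr (e j).2)
      (fun hc => hij (e.injective (Subtype.ext hc)))

theorem stmt9 (s : ℕ) (hs : 1 ≤ s) (V : Type) [Fintype V] (G : SimpleGraph V)
    (hK4 : IsFree (completeGraph (Fin 4)) G) (hSDK : IsFree (SDK s) G)
    (v : V) (B : Set V) (hB : ∀ b ∈ B, G.Adj v b)
    (W : Set V) (hWv : v ∉ W) (hWB : Disjoint W B)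
    (hWadj : ∀ w ∈ W, ¬ G.Adj v w)
    (X : Set V) (hXB : X ⊆ B)
    (hXcov : ∀ w ∈ W, (∃ b ∈ B, G.Adj w b) → ∃ x ∈ X, G.Adj w x)
    (hmin : ∀ X' : Set V, X' ⊂ X →
      ¬ ∀ w ∈ W, (∃ b ∈ B, G.Adj w b) → ∃ x ∈ X', G.Adj w x) :
    X.ncard ≤ ramseyNumber 4 (ramseyNumber 4 s) := by
  classical
  by_contra hcon
  push_neg at hcon
  have specN : RamseyProp 4 (ramseyNumber 4 s) (ramseyNumber 4 (ramseyNumber 4 s)) :=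
    ramseyNumber_spec _ _
  have specM : RamseyProp 4 s (ramseyNumber 4 s) := ramseyNumber_spec _ _
  have noK4 : ∀ S : Finset V, ¬ G.IsNClique 4 S := fun S hS =>
    hK4 (exists_completeGraph_emb hS)
  -- private witnesses
  have priv : ∀ x ∈ X, ∃ wx, wx ∈ W ∧ G.Adj wx x ∧ ∀ x' ∈ X, G.Adj wx x' → x' = x := by
    intro x hx
    have hss : X \ {x} ⊂ X := Set.sdiff_singleton_ssubset.mpr hx
    have hm := hmin _ hss
    push_neg at hm
    obtain ⟨w0, hw0W, hw0B, hw0⟩ := hm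
    obtain ⟨x0, hx0X, hadj⟩ := hXcov w0 hw0W hw0B
    have huniq : ∀ x' ∈ X, G.Adj w0 x' → x' = x := by
      intro x' hx' hadj'
      by_contra hne
      exact hw0 x' ⟨hx', hne⟩ hadj'
    exact ⟨w0, hw0W, (huniq x0 hx0X hadj) ▸ hadj, huniq⟩
  have priv' : ∀ x, ∃ wx, x ∈ X →
      (wx ∈ W ∧ G.Adj wx x ∧ ∀ x' ∈ X, G.Adj wx x' → x' = x) := by
    intro x
    by_cases hx : x ∈ X
    · obtain ⟨wx, h1, h2, h3⟩ := priv x hx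
      exact ⟨wx, fun _ => ⟨h1, h2, h3⟩⟩
    · exact ⟨v, fun h => absurd h hx⟩
  choose wf hwf using priv'
  -- first Ramsey application: independent set Y inside X
  rcases ramseyProp_set specN G X (le_of_lt hcon) with ⟨S, _, hS⟩ | ⟨Y, hYX, hYc⟩
  · exact noK4 _ hS
  have hYXmem : ∀ a ∈ Y, a ∈ X := fun a ha => hYX ha
  -- image of witnesses
  set WY : Finset V := Y.image wf with hWY
  have hinjY : Set.InjOn wf ↑Y := by
    intro a ha b hb hab
    have hbX := hYXmem b hb
    have haX := hYXmem a ha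
    have : G.Adj (wf b) a := hab ▸ (hwf a haX).2.1
    exact (hwf b hbX).2.2 a haX this
  have hWYcard : WY.card = ramseyNumber 4 s := by
    rw [hWY, Finset.card_image_of_injOn hinjY, hYc.2]
  -- second Ramsey application on the witness set
  rcases ramseyProp_set specM G ↑WY (by rw [Set.ncard_coe_finset, hWYcard]) with
    ⟨S, _, hS⟩ | ⟨Z, hZW, hZc⟩
  · exact noK4 _ hS
  -- enumerate Z
  let e : Fin s ≃ ↥Z := (Z.equivFinOfCardEq hZc.2).symm
  set w : Fin s → V := fun i => ↑(e i) with hwdef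
  have hwZ : ∀ i, w i ∈ Z := fun i => (e i).2
  have hw : ∀ i : Fin s, ∃ x ∈ Y, wf x = w i := by
    intro i
    have h1 : w i ∈ WY := hZW (hwZ i)
    rw [hWY, Finset.mem_image] at h1
    exact h1
  choose y hyY hwfy using hw
  have hyX : ∀ i, y i ∈ X := fun i => hYXmem _ (hyY i)
  have hwW : ∀ i, w i ∈ W := fun i => (hwfy i) ▸ (hwf (y i) (hyX i)).1
  have hwAdjy : ∀ i, G.Adj (w i) (y i) := fun i => (hwfy i) ▸ (hwf (y i) (hyX i)).2.1
  have hwUniq : ∀ i, ∀ x' ∈ X, G.Adj (w i) x' → x' = y i := fun i =>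
    (hwfy i) ▸ (hwf (y i) (hyX i)).2.2
  have hwInj : Function.Injective w := fun i j hij =>
    e.injective (Subtype.ext hij)
  have hyInj : Function.Injective y := by
    intro i j hij
    apply hwInj
    rw [← hwfy i, ← hwfy j, hij]
  -- adjacency facts
  have hyy : ∀ i j, i ≠ j → ¬ G.Adj (y i) (y j) := by
    intro i j hij hadj
    have h1 : Gᶜ.Adj (y i) (y j) :=
      hYc.1 (Finset.mem_coe.mpr (hyY i)) (Finset.mem_coe.mpr (hyY j))
        (fun h => hij (hyInj h))
    exact h1.2 hadj
  have hww : ∀ i j, i ≠ j → ¬ G.Adj (w i) (w j) := by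
    intro i j hij hadj
    have h1 : Gᶜ.Adj (w i) (w j) :=
      hZc.1 (Finset.mem_coe.mpr (hwZ i)) (Finset.mem_coe.mpr (hwZ j))
        (fun h => hij (hwInj h))
    exact h1.2 hadj
  have hyw : ∀ i j, G.Adj (y i) (w j) ↔ i = j := by
    intro i j
    constructor
    · intro hadj
      exact (hyInj (hwUniq j (y i) (hyX i) hadj.symm)).symm ▸ rfl
    · rintro rfl
      exact (hwAdjy i).symm
  have hvy : ∀ i, G.Adj v (y i) := fun i => hB _ (hXB (hyX i))
  have hvw : ∀ i, ¬ G.Adj v (w i) := fun i => hWadj _ (hwW i)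
  have hvnw : ∀ i, v ≠ w i := fun i h => hWv (h ▸ hwW i)
  have hynw : ∀ i j, y i ≠ w j := by
    intro i j h
    exact (Set.disjoint_left.mp hWB (hwW j)) (h ▸ hXB (hyX i))
  have hvny : ∀ i, v ≠ y i := fun i => (hvy i).ne
  -- build SDK embedding
  refine hSDK ⟨⟨⟨Sum.elim (fun _ => v) (Sum.elim y w), ?_⟩, ?_⟩⟩
  · rintro (⟨⟩ | i | i) (⟨⟩ | j | j) h <;> simp only [Sum.elim_inl, Sum.elim_inr] at h
    · rfl
    · exact absurd h (hvny j)
    · exact absurd h (hvnw j)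
    · exact absurd h.symm (hvny i)
    · rw [hyInj h]
    · exact absurd h (hynw i j)
    · exact absurd h.symm (hvnw i)
    · exact absurd h.symm (hynw j i)
    · rw [hwInj h]
  · show ∀ {a b : Unit ⊕ Fin s ⊕ Fin s}, G.Adj (Sum.elim (fun _ => v) (Sum.elim y w) a)
      (Sum.elim (fun _ => v) (Sum.elim y w) b) ↔ (SDK s).Adj a b
    rintro (⟨⟩ | i | i) (⟨⟩ | j | j) <;>
      simp only [Function.Embedding.coeFn_mk, Sum.elim_inl, Sum.elim_inr]
    · exact iff_of_false (G.irrefl) ((SDK s).irrefl)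
    · exact iff_of_true (hvy j) (SDK_adj_cm j)
    · exact iff_of_false (hvw j) (SDK_adj_cl j)
    · exact iff_of_true (hvy i).symm (SDK_adj_cm i).symm
    · refine iff_of_false ?_ (SDK_adj_mm i j)
      intro h
      by_cases hij : i = j
      · subst hij; exact G.irrefl h
      · exact hyy i j hij h
    · rw [SDK_adj_ml]; exact hyw i j
    · exact iff_of_false (fun h => hvw i h.symm) (fun h => SDK_adj_cl i h.symm)
    · rw [G.adj_comm, (SDK s).adj_comm, SDK_adj_ml]; exact hyw j i
    · refine iff_of_false ?_ (SDK_adj_ll i j)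
      intro h
      by_cases hij : i = j
      · subst hij; exact G.irrefl h
      · exact hww i j hij h
end

section
/- Let s and t be positive integers with t ≥ 2, and let G be a connected graph that is P_t-free and SDK_s-free. If G admits a proper coloring with 3 colors, then G has a dominating set of size at most (1 + R(4, R(4, s)))^(t-2). -/
open SimpleGraph

-- AUX RAMSEY
def RProp (k l N : ℕ) : Prop :=
  ∀ (V : Type) [Fintype V] (G : SimpleGraph V),
    N ≤ Fintype.card V →
      (∃ S : Finset V, G.IsNClique k S) ∨ (∃ S : Finset V, Gᶜ.IsNClique l S)

lemma rprop_zero_left (l : ℕ) : RProp 0 l 0 := by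
  intro V _ G _
  exact Or.inl ⟨∅, by simp⟩

lemma rprop_zero_right (k : ℕ) : RProp k 0 0 := by
  intro V _ G _
  exact Or.inr ⟨∅, by simp⟩

lemma comap_clique {V : Type} [Fintype V] {G : SimpleGraph V} {A : Finset V}
    {k : ℕ} {S : Finset {x // x ∈ A}}
    (h : (G.comap (Subtype.val : {x // x ∈ A} → V)).IsNClique k S) :
    ∃ T : Finset V, (∀ x ∈ T, x ∈ A) ∧ G.IsNClique k T := by
  classical
  refine ⟨S.map (Function.Embedding.subtype _), ?_, ?_⟩
  · intro x hx
    simp only [Finset.mem_map, Function.Embedding.coe_subtype] at hx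
    obtain ⟨a, _, rfl⟩ := hx
    exact a.2
  · constructor
    · intro x hx y hy hne
      simp only [Finset.coe_map, Set.mem_image, Finset.mem_coe,
        Function.Embedding.coe_subtype] at hx hy
      obtain ⟨a, ha, rfl⟩ := hx
      obtain ⟨b, hb, rfl⟩ := hy
      have hab : a ≠ b := fun h' => hne (by rw [h'])
      exact h.1 ha hb hab
    · rw [Finset.card_map]; exact h.2

lemma comap_indep {V : Type} [Fintype V] {G : SimpleGraph V} {A : Finset V}
    {l : ℕ} {S : Finset {x // x ∈ A}}
    (h : (G.comap (Subtype.val : {x // x ∈ A} → V))ᶜ.IsNClique l S) :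
    ∃ T : Finset V, (∀ x ∈ T, x ∈ A) ∧ Gᶜ.IsNClique l T := by
  classical
  refine ⟨S.map (Function.Embedding.subtype _), ?_, ?_⟩
  · intro x hx
    simp only [Finset.mem_map, Function.Embedding.coe_subtype] at hx
    obtain ⟨a, _, rfl⟩ := hx
    exact a.2
  · constructor
    · intro x hx y hy hne
      simp only [Finset.coe_map, Set.mem_image, Finset.mem_coe,
        Function.Embedding.coe_subtype] at hx hy
      obtain ⟨a, ha, rfl⟩ := hx
      obtain ⟨b, hb, rfl⟩ := hy
      have hab : a ≠ b := fun h' => hne (by rw [h'])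
      have := h.1 ha hb hab
      rw [compl_adj] at this ⊢
      exact ⟨hne, this.2⟩
    · rw [Finset.card_map]; exact h.2

lemma rprop_step {k l N₁ N₂ : ℕ} (h₁ : RProp k (l+1) N₁) (h₂ : RProp (k+1) l N₂) :
    RProp (k+1) (l+1) (N₁ + N₂ + 1) := by
  intro V _ G hcard
  classical
  have hne : Nonempty V := Fintype.card_pos_iff.mp (by omega)
  obtain ⟨v⟩ := hne
  set A : Finset V := G.neighborFinset v with hA
  set B : Finset V := Finset.univ \ insert v A with hB
  have hvA : v ∉ A := by simp [hA]
  have hcards : A.card + B.card + 1 = Fintype.card V := by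
    have h1 : (insert v A).card = A.card + 1 := by
      rw [Finset.card_insert_of_notMem hvA]
    have h2 : B.card = Fintype.card V - (insert v A).card := by
      rw [hB, Finset.card_sdiff_of_subset (Finset.subset_univ _), Finset.card_univ]
    have h3 : (insert v A).card ≤ Fintype.card V := by
      rw [← Finset.card_univ]; exact Finset.card_le_card (Finset.subset_univ _)
    omega
  have hor : N₁ ≤ A.card ∨ N₂ ≤ B.card := by omega
  rcases hor with h | h
  · -- many neighbours
    have hcardA : N₁ ≤ Fintype.card {x // x ∈ A} := by rwa [Fintype.card_coe]
    rcases h₁ {x // x ∈ A} (G.comap Subtype.val) hcardA with ⟨S, hS⟩ | ⟨S, hS⟩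
    · obtain ⟨T, hTA, hT⟩ := comap_clique hS
      refine Or.inl ⟨insert v T, hT.insert fun b hb => ?_⟩
      have := hTA b hb
      rwa [hA, mem_neighborFinset] at this
    · obtain ⟨T, _, hT⟩ := comap_indep hS
      exact Or.inr ⟨T, hT⟩
  · -- many non-neighbours
    have hcardB : N₂ ≤ Fintype.card {x // x ∈ B} := by rwa [Fintype.card_coe]
    rcases h₂ {x // x ∈ B} (G.comap Subtype.val) hcardB with ⟨S, hS⟩ | ⟨S, hS⟩
    · obtain ⟨T, _, hT⟩ := comap_clique hS
      exact Or.inl ⟨T, hT⟩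
    · obtain ⟨T, hTB, hT⟩ := comap_indep hS
      refine Or.inr ⟨insert v T, hT.insert fun b hb => ?_⟩
      have hbB := hTB b hb
      rw [hB, Finset.mem_sdiff, Finset.mem_insert] at hbB
      push_neg at hbB
      rw [compl_adj]
      refine ⟨Ne.symm hbB.2.1, fun hadj => hbB.2.2 ?_⟩
      rwa [hA, mem_neighborFinset]

lemma rprop_exists : ∀ k l : ℕ, ∃ N, RProp k l N := by
  intro k
  induction k with
  | zero => exact fun l => ⟨0, rprop_zero_left l⟩
  | succ k ihk =>
    intro l
    induction l with
    | zero => exact ⟨0, rprop_zero_right _⟩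
    | succ l ihl =>
      obtain ⟨N₁, h₁⟩ := ihk (l+1)
      obtain ⟨N₂, h₂⟩ := ihl
      exact ⟨N₁ + N₂ + 1, rprop_step h₁ h₂⟩

lemma ramsey_spec (k l : ℕ) : RProp k l (ramseyNumber k l) := by
  have hne : {N | RProp k l N}.Nonempty := rprop_exists k l
  exact Nat.sInf_mem hne

lemma ramsey_finset {k l : ℕ} {V : Type} [Fintype V] (G : SimpleGraph V)
    (X : Finset V) (h : ramseyNumber k l ≤ X.card) :
    (∃ T : Finset V, (∀ x ∈ T, x ∈ X) ∧ G.IsNClique k T) ∨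
    (∃ T : Finset V, (∀ x ∈ T, x ∈ X) ∧ Gᶜ.IsNClique l T) := by
  classical
  have hcard : ramseyNumber k l ≤ Fintype.card {x // x ∈ X} := by
    rwa [Fintype.card_coe]
  rcases ramsey_spec k l {x // x ∈ X} (G.comap Subtype.val) hcard with ⟨S, hS⟩ | ⟨S, hS⟩
  · exact Or.inl (comap_clique hS)
  · exact Or.inr (comap_indep hS)

-- AUX DIST
section DistAux
variable {V : Type} [Fintype V] {G : SimpleGraph V}

lemma dist_getVert_le (hconn : G.Connected) {u w : V} (p : G.Walk u w) :
    ∀ i : ℕ, G.dist u (p.getVert i) ≤ i := by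
  intro i
  induction i with
  | zero => simp [Walk.getVert_zero]
  | succ i ih =>
    by_cases hi : i < p.length
    · have hadj := p.adj_getVert_succ hi
      calc G.dist u (p.getVert (i+1)) ≤
            G.dist u (p.getVert i) + G.dist (p.getVert i) (p.getVert (i+1)) :=
              hconn.dist_triangle
        _ ≤ i + 1 := by
            have : G.dist (p.getVert i) (p.getVert (i+1)) = 1 :=
              (dist_eq_one_iff_adj).mpr hadj
            omega
    · push_neg at hi
      rw [p.getVert_of_length_le (by omega : p.length ≤ i + 1),
        ← p.getVert_of_length_le hi]
      omega

lemma dist_getVert_eq (hconn : G.Connected) {u w : V} (p : G.Walk u w)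
    (hp : p.length = G.dist u w) {i : ℕ} (hi : i ≤ p.length) :
    G.dist u (p.getVert i) = i := by
  have h1 := dist_getVert_le hconn p i
  -- lower bound: dist from getVert i to w is ≤ length - i
  have h2 : G.dist (p.getVert i) w ≤ p.length - i := by
    have := dist_getVert_le hconn p.reverse (p.length - i)
    rwa [Walk.getVert_reverse, dist_comm, show p.length - (p.length - i) = i by omega] at this
  have h3 : G.dist u w ≤ G.dist u (p.getVert i) + G.dist (p.getVert i) w :=
    hconn.dist_triangle
  omega

lemma exists_penultimate (hconn : G.Connected) {u w : V} {m : ℕ}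
    (h : G.dist u w = m + 1) :
    ∃ w', G.Adj w' w ∧ G.dist u w' = m := by
  obtain ⟨p, hp⟩ := hconn.exists_walk_length_eq_dist u w
  refine ⟨p.getVert m, ?_, ?_⟩
  · have := p.adj_getVert_succ (by omega : m < p.length)
    rwa [show m + 1 = p.length by omega, p.getVert_length] at this
  · exact dist_getVert_eq hconn p (by omega) (by omega)

lemma dist_le_of_pathFree {t : ℕ} (ht : 2 ≤ t) (hconn : G.Connected)
    (hPt : ¬ Nonempty (SimpleGraph.pathGraph t ↪g G)) (v w : V) :
    G.dist v w ≤ t - 2 := by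
  by_contra hlt
  push_neg at hlt
  set d := G.dist v w with hd
  obtain ⟨p, hp⟩ := hconn.exists_walk_length_eq_dist v w
  have htd : t - 1 ≤ d := by omega
  have hdist : ∀ i : Fin t, G.dist v (p.getVert i) = i := by
    intro i
    exact dist_getVert_eq hconn p (by omega) (by have := i.2; omega)
  refine hPt ⟨⟨⟨fun i => p.getVert i, ?_⟩, ?_⟩⟩
  · intro i j hij
    have hij' : p.getVert i.val = p.getVert j.val := hij
    have h1 := hdist i
    rw [hij', hdist j] at h1
    exact Fin.ext h1.symm
  · intro i j
    change G.Adj (p.getVert i) (p.getVert j) ↔ _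
    rw [pathGraph_adj]
    constructor
    · intro hadj
      have h1 : G.dist v (p.getVert j) ≤ G.dist v (p.getVert i) + 1 := by
        calc G.dist v (p.getVert j) ≤
            G.dist v (p.getVert i) + G.dist (p.getVert i) (p.getVert j) := hconn.dist_triangle
          _ = G.dist v (p.getVert i) + 1 := by rw [dist_eq_one_iff_adj.mpr hadj]
      have h2 : G.dist v (p.getVert i) ≤ G.dist v (p.getVert j) + 1 := by
        calc G.dist v (p.getVert i) ≤
            G.dist v (p.getVert j) + G.dist (p.getVert j) (p.getVert i) := hconn.dist_triangle
          _ = G.dist v (p.getVert j) + 1 := by rw [dist_eq_one_iff_adj.mpr hadj.symm]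
      have hne : (i : ℕ) ≠ (j : ℕ) := by
        intro h
        rw [show (i:ℕ) = (j:ℕ) from h] at hadj
        exact G.irrefl hadj
      rw [hdist i, hdist j] at h1 h2
      omega
    · intro h
      rcases h with h | h
      · have := p.adj_getVert_succ (i := (i:ℕ)) (by have := j.2; omega)
        rwa [h] at this
      · have := p.adj_getVert_succ (i := (j:ℕ)) (by have := i.2; omega)
        rw [h] at this
        exact this.symm

end DistAux

-- AUX KEY
lemma SDK_adj {s : ℕ} (a b : Unit ⊕ Fin s ⊕ Fin s) :
    (SDK s).Adj a b ↔
      (∃ i : Fin s, a = Sum.inl () ∧ b = Sum.inr (Sum.inl i)) ∨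
      (∃ i : Fin s, a = Sum.inr (Sum.inl i) ∧ b = Sum.inr (Sum.inr i)) ∨
      (∃ i : Fin s, b = Sum.inl () ∧ a = Sum.inr (Sum.inl i)) ∨
      (∃ i : Fin s, b = Sum.inr (Sum.inl i) ∧ a = Sum.inr (Sum.inr i)) := by
  rw [SDK, fromRel_adj]
  constructor
  · rintro ⟨hne, (⟨i, ha, hb⟩ | ⟨i, ha, hb⟩) | (⟨i, ha, hb⟩ | ⟨i, ha, hb⟩)⟩
    · exact Or.inl ⟨i, ha, hb⟩
    · exact Or.inr (Or.inl ⟨i, ha, hb⟩)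
    · exact Or.inr (Or.inr (Or.inl ⟨i, ha, hb⟩))
    · exact Or.inr (Or.inr (Or.inr ⟨i, ha, hb⟩))
  · rintro (⟨i, rfl, rfl⟩ | ⟨i, rfl, rfl⟩ | ⟨i, rfl, rfl⟩ | ⟨i, rfl, rfl⟩)
    · exact ⟨by simp, Or.inl (Or.inl ⟨i, rfl, rfl⟩)⟩
    · exact ⟨by simp, Or.inl (Or.inr ⟨i, rfl, rfl⟩)⟩
    · exact ⟨by simp, Or.inr (Or.inl ⟨i, rfl, rfl⟩)⟩
    · exact ⟨by simp, Or.inr (Or.inr ⟨i, rfl, rfl⟩)⟩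

lemma no_sdk_embed {V : Type} {G : SimpleGraph V} {s : ℕ}
    (hSDK : ¬ Nonempty (SDK s ↪g G)) (u : V) (g w : Fin s → V)
    (hginj : Function.Injective g)
    (hwinj : Function.Injective w)
    (hug : ∀ i, G.Adj u (g i))
    (hgw : ∀ i, G.Adj (g i) (w i))
    (huw : ∀ i, ¬ G.Adj u (w i))
    (hune_w : ∀ i, u ≠ w i)
    (hg_ne_w : ∀ i j, g i ≠ w j)
    (hgg : ∀ i j, i ≠ j → ¬ G.Adj (g i) (g j))
    (hgwij : ∀ i j, i ≠ j → ¬ G.Adj (g i) (w j))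
    (hww : ∀ i j, i ≠ j → ¬ G.Adj (w i) (w j)) : False := by
  apply hSDK
  refine ⟨⟨⟨Sum.elim (fun _ => u) (Sum.elim g w), ?_⟩, ?_⟩⟩
  · rintro (⟨⟩ | i | i) (⟨⟩ | j | j) h <;>
      simp only [Sum.elim_inl, Sum.elim_inr] at h
    · rfl
    · exact absurd h (hug j).ne
    · exact absurd h (hune_w j)
    · exact absurd h.symm (hug i).ne
    · rw [hginj h]
    · exact absurd h (hg_ne_w i j)
    · exact absurd h.symm (hune_w i)
    · exact absurd h.symm (hg_ne_w j i)
    · rw [hwinj h]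
  · rintro (⟨⟩ | i | i) (⟨⟩ | j | j) <;>
      dsimp only [DFunLike.coe, Sum.elim_inl, Sum.elim_inr]
    · exact iff_of_false (G.irrefl) (by simp [SDK_adj])
    · exact iff_of_true (hug j) ((SDK_adj _ _).mpr (Or.inl ⟨j, rfl, rfl⟩))
    · exact iff_of_false (huw j) (by simp [SDK_adj])
    · exact iff_of_true (hug i).symm
        ((SDK_adj _ _).mpr (Or.inr (Or.inr (Or.inl ⟨i, rfl, rfl⟩))))
    · refine iff_of_false ?_ (by simp [SDK_adj])
      intro hadj
      rcases eq_or_ne i j with rfl | hne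
      · exact G.irrefl hadj
      · exact hgg i j hne hadj
    · constructor
      · intro hadj
        have hij : i = j := by
          by_contra hne
          exact hgwij i j hne hadj
        subst hij
        exact (SDK_adj _ _).mpr (Or.inr (Or.inl ⟨i, rfl, rfl⟩))
      · intro hadj
        rcases (SDK_adj _ _).mp hadj with ⟨i', hi, _⟩ | ⟨i', hi, hj⟩ |
          ⟨i', hi, _⟩ | ⟨i', hi, hj⟩
        · exact absurd hi (by simp)
        · have h1 : i = i' := by simpa using hi
          have h2 : j = i' := by simpa using hj
          subst h1; subst h2
          exact hgw _
        · exact absurd hi (by simp)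
        · exact absurd hi (by simp)
    · exact iff_of_false (fun hadj => huw i hadj.symm) (by simp [SDK_adj])
    · constructor
      · intro hadj
        have hij : j = i := by
          by_contra hne
          exact hgwij j i hne hadj.symm
        subst hij
        exact (SDK_adj _ _).mpr (Or.inr (Or.inr (Or.inr ⟨j, rfl, rfl⟩)))
      · intro hadj
        rcases (SDK_adj _ _).mp hadj with ⟨i', hi, _⟩ | ⟨i', hi, hj⟩ |
          ⟨i', hi, _⟩ | ⟨i', hi, hj⟩
        · exact absurd hi (by simp)
        · exact absurd hi (by simp)
        · exact absurd hi (by simp)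
        · have h1 : j = i' := by simpa using hi
          have h2 : i = i' := by simpa using hj
          subst h1; subst h2
          exact (hgw _).symm
    · refine iff_of_false ?_ (by simp [SDK_adj])
      intro hadj
      rcases eq_or_ne i j with rfl | hne
      · exact G.irrefl hadj
      · exact hww i j hne hadj

lemma exists_dominator {V : Type} [Fintype V] {G : SimpleGraph V} {s : ℕ}
    (hconn : G.Connected) (hSDK : ¬ Nonempty (SDK s ↪g G))
    (hK4 : ∀ S : Finset V, ¬ G.IsNClique 4 S) (u : V) :
    ∃ S : Finset V, S.card ≤ ramseyNumber 4 (ramseyNumber 4 s) ∧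
      ∀ w, G.dist u w = 2 → ∃ x ∈ S, G.Adj x w := by
  classical
  set F : Set (Finset V) := {X | (∀ x ∈ X, G.Adj u x) ∧
      ∀ w, G.dist u w = 2 → ∃ x ∈ X, G.Adj x w} with hF
  have hF0 : (Finset.univ.filter (fun x => G.Adj u x)) ∈ F := by
    constructor
    · intro x hx
      exact (Finset.mem_filter.mp hx).2
    · intro w hw
      obtain ⟨p, hp⟩ := hconn.exists_walk_length_eq_dist u w
      refine ⟨p.getVert 1, ?_, ?_⟩
      · have h01 := p.adj_getVert_succ (i := 0) (by omega)
        rw [p.getVert_zero] at h01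
        exact Finset.mem_filter.mpr ⟨Finset.mem_univ _, h01⟩
      · have h12 := p.adj_getVert_succ (i := 1) (by omega)
        rwa [show (1+1 : ℕ) = p.length by omega, p.getVert_length] at h12
  have hcne : ((fun X : Finset V => X.card) '' F).Nonempty := ⟨_, _, hF0, rfl⟩
  obtain ⟨X, hXF, hXcard⟩ := Nat.sInf_mem hcne
  have hXcard' : X.card = sInf ((fun X : Finset V => X.card) '' F) := hXcard
  have hmin : ∀ Y ∈ F, X.card ≤ Y.card := fun Y hY => by
    rw [hXcard']; exact Nat.sInf_le ⟨Y, hY, rfl⟩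
  refine ⟨X, ?_, hXF.2⟩
  by_contra hbig
  push_neg at hbig
  -- privacy
  have hpriv : ∀ x : V, ∃ wx : V, x ∈ X → G.dist u wx = 2 ∧ G.Adj x wx ∧
      ∀ y ∈ X, y ≠ x → ¬ G.Adj y wx := by
    intro x
    by_cases hx : x ∈ X
    · have herase : X.erase x ∉ F := by
        intro h
        have h1 := hmin _ h
        have h2 := Finset.card_erase_of_mem hx
        have h3 : 0 < X.card := Finset.card_pos.mpr ⟨x, hx⟩
        omega
      have h1 : ∀ y ∈ X.erase x, G.Adj u y := fun y hy =>
        hXF.1 y (Finset.mem_of_mem_erase hy)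
      have h2 : ¬ ∀ w, G.dist u w = 2 → ∃ y ∈ X.erase x, G.Adj y w :=
        fun h => herase ⟨h1, h⟩
      push_neg at h2
      obtain ⟨wx, hwx2, hwxn⟩ := h2
      obtain ⟨x', hx', hadj⟩ := hXF.2 wx hwx2
      have hxx : x' = x := by
        by_contra hne
        exact hwxn x' (Finset.mem_erase.mpr ⟨hne, hx'⟩) hadj
      subst hxx
      exact ⟨wx, fun _ => ⟨hwx2, hadj,
        fun y hy hne => hwxn y (Finset.mem_erase.mpr ⟨hne, hy⟩)⟩⟩
    · exact ⟨u, fun h => absurd h hx⟩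
  choose wf hwf using hpriv
  rcases ramsey_finset (k := 4) (l := ramseyNumber 4 s) G X (by omega) with ⟨T, hTX, hT⟩ | ⟨T, hTX, hT⟩
  · exact hK4 T hT
  have hTind : ∀ x ∈ T, ∀ y ∈ T, x ≠ y → ¬ G.Adj x y := by
    intro x hx y hy hne hadj
    have h := hT.1 (Finset.mem_coe.mpr hx) (Finset.mem_coe.mpr hy) hne
    rw [compl_adj] at h
    exact h.2 hadj
  have hwinj : Set.InjOn wf ↑T := by
    intro x hx y hy heq
    by_contra hne
    have hyX : y ∈ X := hTX y (Finset.mem_coe.mp hy)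
    have hxX : x ∈ X := hTX x (Finset.mem_coe.mp hx)
    have hady : G.Adj y (wf y) := (hwf y hyX).2.1
    have hpr := (hwf x hxX).2.2 y hyX (fun h => hne h.symm)
    rw [heq] at hpr
    exact hpr hady
  set W := T.image wf with hW
  have hWcard : ramseyNumber 4 s ≤ W.card := by
    rw [hW, Finset.card_image_of_injOn hwinj, hT.2]
  rcases ramsey_finset (k := 4) (l := s) G W hWcard with ⟨J, hJW, hJ⟩ | ⟨J, hJW, hJ⟩
  · exact hK4 J hJ
  have hJind : ∀ x ∈ J, ∀ y ∈ J, x ≠ y → ¬ G.Adj x y := by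
    intro x hx y hy hne hadj
    have h := hJ.1 (Finset.mem_coe.mpr hx) (Finset.mem_coe.mpr hy) hne
    rw [compl_adj] at h
    exact h.2 hadj
  set T' := T.filter (fun x => wf x ∈ J) with hT'
  have hT'T : T' ⊆ T := Finset.filter_subset _ _
  have hT'card : T'.card = s := by
    have himg : T'.image wf = J := by
      apply Finset.Subset.antisymm
      · intro t ht
        obtain ⟨x, hx, rfl⟩ := Finset.mem_image.mp ht
        exact (Finset.mem_filter.mp hx).2
      · intro t ht
        obtain ⟨x, hxT, rfl⟩ := Finset.mem_image.mp (hJW t ht)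
        exact Finset.mem_image.mpr ⟨x, Finset.mem_filter.mpr ⟨hxT, ht⟩, rfl⟩
    have h1 : T'.card = (T'.image wf).card :=
      (Finset.card_image_of_injOn (hwinj.mono (by exact_mod_cast hT'T))).symm
    rw [h1, himg, hJ.2]
  let e := T'.equivFin
  let g : Fin s → V := fun i => (e.symm (Fin.cast hT'card.symm i)).val
  have hg_mem : ∀ i, g i ∈ T' := fun i => (e.symm _).2
  have hg_inj : Function.Injective g := by
    intro i j h
    have h2 : e.symm (Fin.cast hT'card.symm i) = e.symm (Fin.cast hT'card.symm j) :=
      Subtype.ext h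
    have h3 := e.symm.injective h2
    exact Fin.ext (by simpa using congrArg Fin.val h3)
  have hgT : ∀ i, g i ∈ T := fun i => hT'T (hg_mem i)
  have hgX : ∀ i, g i ∈ X := fun i => hTX _ (hgT i)
  have hgJ : ∀ i, wf (g i) ∈ J := fun i => (Finset.mem_filter.mp (hg_mem i)).2
  have hdist2 : ∀ i, G.dist u (wf (g i)) = 2 := fun i => (hwf _ (hgX i)).1
  have hug : ∀ i, G.Adj u (g i) := fun i => hXF.1 _ (hgX i)
  have hgw : ∀ i, G.Adj (g i) (wf (g i)) := fun i => (hwf _ (hgX i)).2.1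
  have hwfinj : ∀ i j, wf (g i) = wf (g j) → i = j := fun i j h =>
    hg_inj (hwinj (Finset.mem_coe.mpr (hgT i)) (Finset.mem_coe.mpr (hgT j)) h)
  refine no_sdk_embed hSDK u g (fun i => wf (g i)) hg_inj
    (fun i j h => hwfinj i j h) hug hgw ?_ ?_ ?_ ?_ ?_ ?_
  · intro i hadj
    have hadj' : G.Adj u (wf (g i)) := hadj
    have h1 := dist_eq_one_iff_adj.mpr hadj'
    have h2 := hdist2 i
    omega
  · intro i h
    have h' : u = wf (g i) := h
    have h2 := hdist2 i
    rw [← h'] at h2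
    rw [SimpleGraph.dist_self] at h2
    exact two_ne_zero h2.symm
  · intro i j h
    have h' : g i = wf (g j) := h
    have h1 : G.dist u (g i) = 1 := dist_eq_one_iff_adj.mpr (hug i)
    have h2 := hdist2 j
    rw [← h'] at h2
    omega
  · intro i j hne
    exact hTind _ (hgT i) _ (hgT j) (fun h => hne (hg_inj h))
  · intro i j hne hadj
    exact (hwf _ (hgX j)).2.2 (g i) (hgX i) (fun h => hne (hg_inj h)) hadj
  · intro i j hne
    exact hJind _ (hgJ i) _ (hgJ j) (fun h => hne (hwfinj i j h))


theorem stmt10 (s t : ℕ) (hs : 1 ≤ s) (ht : 2 ≤ t)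
    (V : Type) [Fintype V] (G : SimpleGraph V) (hconn : G.Connected)
    (hPt : IsFree (SimpleGraph.pathGraph t) G) (hSDK : IsFree (SDK s) G)
    (f : V → Fin 3) (hf : ∀ a b : V, G.Adj a b → f a ≠ f b) :
    ∃ D : Finset V, (∀ v : V, v ∉ D → ∃ d ∈ D, G.Adj v d) ∧
      D.card ≤ (1 + ramseyNumber 4 (ramseyNumber 4 s)) ^ (t - 2) := by
  classical
  have hK4 : ∀ S : Finset V, ¬ G.IsNClique 4 S := by
    intro S hS
    have hcard : (Finset.univ : Finset (Fin 3)).card < S.card := by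
      rw [hS.2, Finset.card_univ, Fintype.card_fin]
      norm_num
    obtain ⟨x, hx, y, hy, hne, hfe⟩ :=
      Finset.exists_ne_map_eq_of_card_lt_of_maps_to hcard
        (fun a _ => Finset.mem_univ (f a))
    exact hf x y (hS.1 hx hy hne) hfe
  obtain ⟨v⟩ := hconn.nonempty
  set R := ramseyNumber 4 (ramseyNumber 4 s) with hR
  choose S hScard hSdom using fun u => exists_dominator hconn hSDK hK4 u
  let D : ℕ → Finset V := fun n => Nat.rec {v} (fun _ Dn => Dn ∪ Dn.biUnion S) n
  have hD0 : D 0 = {v} := rfl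
  have hDs : ∀ n, D (n+1) = D n ∪ (D n).biUnion S := fun n => rfl
  have hmono : ∀ n, D n ⊆ D (n+1) := fun n => by
    rw [hDs]; exact Finset.subset_union_left
  have hcardD : ∀ n, (D n).card ≤ (1+R)^n := by
    intro n
    induction n with
    | zero => simp [hD0]
    | succ n ih =>
      rw [hDs]
      calc (D n ∪ (D n).biUnion S).card
          ≤ (D n).card + ((D n).biUnion S).card := Finset.card_union_le _ _
        _ ≤ (D n).card + ∑ u ∈ D n, (S u).card :=
            Nat.add_le_add_left (Finset.card_biUnion_le) _
        _ ≤ (D n).card + (D n).card * R := by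
            have hsum : ∑ u ∈ D n, (S u).card ≤ (D n).card • R :=
              Finset.sum_le_card_nsmul _ _ _ (fun u _ => hScard u)
            rw [smul_eq_mul] at hsum
            omega
        _ = (D n).card * (1 + R) := by ring
        _ ≤ (1+R)^n * (1+R) := Nat.mul_le_mul_right _ ih
        _ = (1+R)^(n+1) := (pow_succ _ _).symm
  have hdom : ∀ n, ∀ w : V, G.dist v w ≤ n + 1 →
      w ∈ D n ∨ ∃ d ∈ D n, G.Adj w d := by
    intro n
    induction n with
    | zero =>
      intro w hw
      rcases Nat.lt_or_ge (G.dist v w) 1 with h | h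
      · have h0 : G.dist v w = 0 := by omega
        have hvw : v = w := (hconn.dist_eq_zero_iff).mp h0
        left
        rw [hD0, ← hvw]
        exact Finset.mem_singleton_self v
      · have h1 : G.dist v w = 1 := by omega
        right
        exact ⟨v, by rw [hD0]; exact Finset.mem_singleton_self v,
          (dist_eq_one_iff_adj.mp h1).symm⟩
    | succ n ih =>
      intro w hw
      by_cases hle : G.dist v w ≤ n + 1
      · rcases ih w hle with h | ⟨d, hd, hadj⟩
        · exact Or.inl (hmono n h)
        · exact Or.inr ⟨d, hmono n hd, hadj⟩
      · have heq : G.dist v w = (n + 1) + 1 := by omega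
        obtain ⟨w', hadj', hdist'⟩ := exists_penultimate hconn heq
        rcases ih w' (le_of_eq hdist') with h | ⟨d, hd, hadj⟩
        · exact Or.inr ⟨w', hmono n h, hadj'.symm⟩
        · have hdw : G.dist d w ≤ 2 := by
            have htr : G.dist d w ≤ G.dist d w' + G.dist w' w := hconn.dist_triangle
            have h1 : G.dist d w' = 1 := dist_eq_one_iff_adj.mpr hadj.symm
            have h2 : G.dist w' w = 1 := dist_eq_one_iff_adj.mpr hadj'
            omega
          interval_cases h2 : G.dist d w
          · have : d = w := (hconn.dist_eq_zero_iff).mp h2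
            exact Or.inl (hmono n (this ▸ hd))
          · exact Or.inr ⟨d, hmono n hd, (dist_eq_one_iff_adj.mp h2).symm⟩
          · obtain ⟨x, hxS, hxadj⟩ := hSdom d w h2
            refine Or.inr ⟨x, ?_, hxadj.symm⟩
            rw [hDs]
            exact Finset.mem_union_right _ (Finset.mem_biUnion.mpr ⟨d, hd, hxS⟩)
  refine ⟨D (t-2), ?_, hcardD (t-2)⟩
  intro w hw
  have hdist := dist_le_of_pathFree ht hconn hPt v w
  rcases hdom (t-2) w (by omega) with h | h
  · exact absurd h hw
  · exact h
end
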